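/- Let g, h, i ∈ ℂ[t,x,y] be homogeneous polynomials of degree 2 and set F = g·y² + h·yz + i·z² ∈ ℂ[t,x,y,z] and Δ' = Y²Z² + h(T,X,Y)·YZ + g(T,X,Y)·i(T,X,Y) ∈ ℂ[T,X,Y,Z]. Then substituting (T,X,Y,Z) = (tz, xz, yz, g(t,x,y)) gives the identity Δ'(tz, xz, yz, g(t,x,y)) = z²·g(t,x,y)·F(t,x,y,z) in ℂ[t,x,y,z]. -/
import Mathlib


open MvPolynomial


private lemma aeval_scale {σ : Type*} [Fintype σ] {S : Type*} [CommRing S] [Algebra ℂ S]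
    {n : ℕ} (p : MvPolynomial σ ℂ) (hp : p.IsHomogeneous n)
    (v : σ → S) (w : S) :
    aeval (fun j => v j * w) p = w ^ n * aeval v p := by
  rw [aeval_def, aeval_def, eval₂_eq', eval₂_eq', Finset.mul_sum]
  refine Finset.sum_congr rfl fun d hd => ?_
  have hdeg : ∑ i, d i = n := by
    have := hp (mem_support_iff.mp hd)
    rw [Finsupp.weight_apply, Finsupp.sum_fintype] at this
    · simpa using this
    · simp
  simp only [mul_pow, Finset.prod_mul_distrib, Finset.prod_pow_eq_pow_sum, hdeg]
  ring

/-- For `g,h,i ∈ ℂ[t,x,y]` homogeneous of degree `2`, setting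
`F = g·y² + h·yz + i·z²` and `Δ' = Y²Z² + h(T,X,Y)·YZ + g(T,X,Y)·i(T,X,Y)`, substituting
`(T,X,Y,Z) = (tz, xz, yz, g(t,x,y))` into `Δ'` yields `z² · g · F`.
Variables: in `ℂ[t,x,y,z]` (and `ℂ[T,X,Y,Z]`) we use `t = X 0`, `x = X 1`, `y = X 2`,
`z = X 3`; in `ℂ[t,x,y]` we use `t = X 0`, `x = X 1`, `y = X 2`. -/
theorem stmt_8 (g h i : MvPolynomial (Fin 3) ℂ)
    (hg : g.IsHomogeneous 2) (hh : h.IsHomogeneous 2) (hi : i.IsHomogeneous 2)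
    (F : MvPolynomial (Fin 4) ℂ)
    (hF : F = aeval ![(X 0 : MvPolynomial (Fin 4) ℂ), X 1, X 2] g * X 2 ^ 2
      + aeval ![(X 0 : MvPolynomial (Fin 4) ℂ), X 1, X 2] h * (X 2 * X 3)
      + aeval ![(X 0 : MvPolynomial (Fin 4) ℂ), X 1, X 2] i * X 3 ^ 2)
    (Δ' : MvPolynomial (Fin 4) ℂ)
    (hΔ' : Δ' = X 2 ^ 2 * X 3 ^ 2
      + aeval ![(X 0 : MvPolynomial (Fin 4) ℂ), X 1, X 2] h * (X 2 * X 3)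
      + aeval ![(X 0 : MvPolynomial (Fin 4) ℂ), X 1, X 2] g
        * aeval ![(X 0 : MvPolynomial (Fin 4) ℂ), X 1, X 2] i) :
    aeval ![(X 0 * X 3 : MvPolynomial (Fin 4) ℂ), X 1 * X 3, X 2 * X 3,
        aeval ![(X 0 : MvPolynomial (Fin 4) ℂ), X 1, X 2] g] Δ'
      = X 3 ^ 2 * aeval ![(X 0 : MvPolynomial (Fin 4) ℂ), X 1, X 2] g * F := by
  set A : MvPolynomial (Fin 3) ℂ →ₐ[ℂ] MvPolynomial (Fin 4) ℂ :=
    aeval ![(X 0 : MvPolynomial (Fin 4) ℂ), X 1, X 2] with hA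
  set Sb : MvPolynomial (Fin 4) ℂ →ₐ[ℂ] MvPolynomial (Fin 4) ℂ :=
    aeval ![(X 0 * X 3 : MvPolynomial (Fin 4) ℂ), X 1 * X 3, X 2 * X 3, A g] with hS
  have key : ∀ p : MvPolynomial (Fin 3) ℂ, p.IsHomogeneous 2 →
      Sb (A p) = X 3 ^ 2 * A p := by
    intro p hp
    have h1 : Sb (A p) = aeval (fun j => (![(X 0 : MvPolynomial (Fin 4) ℂ), X 1, X 2] j) * X 3) p := by
      rw [← AlgHom.comp_apply, hA, comp_aeval]
      have hfun : (fun i => Sb ((![(X 0 : MvPolynomial (Fin 4) ℂ), X 1, X 2]) i))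
          = fun j => (![(X 0 : MvPolynomial (Fin 4) ℂ), X 1, X 2]) j * X 3 := by
        funext j
        fin_cases j <;> simp [hS]
      rw [hfun]
    rw [h1, aeval_scale p hp]
  subst hF hΔ'
  simp only [map_add, map_mul, map_pow, key g hg, key h hh, key i hi]
  have h2 : Sb (X 2) = X 2 * X 3 := by simp [hS]
  have h3 : Sb (X 3) = A g := by simp [hS]
  rw [h2, h3]
  ring
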